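/- Let d and k both be odd and n > 1. Then AT_d(k,T) = 0 for every magic set T ⊆ [k]^d of cardinality nk, where AT_d(k,T) is the signed sum of sgn(C) over all partial Latin hypercubes C of type T. In particular AT_d(k) = 0 for odd d,k. -/
import Mathlib


open scoped Classical

namespace AT

/-- Lexicographic strict order on cells of `[k]^d`. -/
def cellLt {d k : ℕ} (a b : Fin d → Fin k) : Prop :=
  ∃ i : Fin d, (∀ j : Fin d, j < i → a j = b j) ∧ a i < b i

/-- Number of inversions of the values of `C` (blanks coded by `0`) in the slice of
direction `ℓ` with coordinate `j`, cells compared in lexicographic order. -/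
noncomputable def sliceInv {d k : ℕ} (C : (Fin d → Fin k) → ℕ) (ℓ : Fin d) (j : Fin k) : ℕ :=
  Set.ncard {p : (Fin d → Fin k) × (Fin d → Fin k) |
    p.1 ℓ = j ∧ p.2 ℓ = j ∧ cellLt p.1 p.2 ∧ C p.2 ≠ 0 ∧ C p.2 < C p.1}

/-- Directional sign: product over the slices in direction `ℓ` of the signs of the
slice permutations (computed as `(-1)^inversions`). -/
noncomputable def dirSgn {d k : ℕ} (C : (Fin d → Fin k) → ℕ) (ℓ : Fin d) : ℤ :=
  ∏ j : Fin k, (-1 : ℤ) ^ sliceInv C ℓ j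

/-- Full sign of a (partial) Latin hypercube. -/
noncomputable def fullSgn {d k : ℕ} (C : (Fin d → Fin k) → ℕ) : ℤ :=
  ∏ ℓ : Fin d, dirSgn C ℓ

/-- `C` is a `d`-dimensional Latin hypercube of length `k` with values in `[n]`:
every value of `[n]` occurs exactly once in every slice. -/
def IsLatin (d k n : ℕ) (C : (Fin d → Fin k) → ℕ) : Prop :=
  (∀ a, 1 ≤ C a ∧ C a ≤ n) ∧
  ∀ (ℓ : Fin d) (j : Fin k) (v : ℕ), 1 ≤ v → v ≤ n →
    ∃! a : Fin d → Fin k, a ℓ = j ∧ C a = v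

end AT

namespace AT

/-- `T` is a magic set with `n` cells in every slice (hence of cardinality `n·k`). -/
def IsMagic (d k n : ℕ) (T : Finset (Fin d → Fin k)) : Prop :=
  ∀ (ℓ : Fin d) (j : Fin k), (T.filter fun a => a ℓ = j).card = n

/-- `C` is a partial Latin hypercube of type `T` and cardinality `n·k`: it is supported
exactly on `T`, takes values in `{0,…,n}`, and on every slice its nonzero values form
a permutation of `[n]`. -/
def IsPartialLatin (d k n : ℕ) (T : Finset (Fin d → Fin k)) (C : (Fin d → Fin k) → ℕ) : Prop :=
  (∀ a, a ∈ T ↔ C a ≠ 0) ∧ (∀ a, C a ≤ n) ∧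
  ∀ (ℓ : Fin d) (j : Fin k) (v : ℕ), 1 ≤ v → v ≤ n →
    ∃! a : Fin d → Fin k, a ℓ = j ∧ C a = v

end AT

namespace ATProof
open AT

def sw (m : ℕ) : ℕ := if m = 1 then 2 else if m = 2 then 1 else m

lemma sw_sw (m : ℕ) : sw (sw m) = m := by unfold sw; split_ifs <;> omega

lemma sw_eq_zero (m : ℕ) : sw m = 0 ↔ m = 0 := by
  unfold sw; split_ifs <;> subst_vars <;> simp

lemma sw_le {n m : ℕ} (hn : 2 ≤ n) (h : m ≤ n) : sw m ≤ n := by unfold sw; split_ifs <;> omega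

lemma sw_one : sw 1 = 2 := rfl
lemma sw_two : sw 2 = 1 := rfl

lemma sw_lt {x y : ℕ} (hxy : ¬((x = 1 ∧ y = 2) ∨ (x = 2 ∧ y = 1))) :
    (sw y < sw x ↔ y < x) := by
  unfold sw; split_ifs <;> subst_vars <;> omega

lemma cellLt_asymm {d k : ℕ} {a b : Fin d → Fin k} (h1 : cellLt a b) (h2 : cellLt b a) : False := by
  obtain ⟨i, hi, hlt⟩ := h1
  obtain ⟨i', hi', hlt'⟩ := h2
  rcases lt_trichotomy i i' with h | h | h
  · rw [hi' i h] at hlt; exact lt_irrefl _ hlt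
  · subst h; exact lt_asymm hlt hlt'
  · rw [hi i' h] at hlt'; exact lt_irrefl _ hlt'

lemma cellLt_total {d k : ℕ} {a b : Fin d → Fin k} (h : a ≠ b) : cellLt a b ∨ cellLt b a := by
  have hne : ∃ i, a i ≠ b i := by
    by_contra hc; push_neg at hc; exact h (funext hc)
  classical
  set s : Finset (Fin d) := Finset.univ.filter fun i => a i ≠ b i with hs_def
  have hs : s.Nonempty := by obtain ⟨i, hi⟩ := hne; exact ⟨i, by simp [hs_def, hi]⟩
  set i := s.min' hs with hidef
  have hmem : a i ≠ b i := by have := s.min'_mem hs; simpa [hs_def] using this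
  have hprev : ∀ j, j < i → a j = b j := by
    intro j hj
    by_contra hc
    have hle : i ≤ j := s.min'_le j (by simp [hs_def, hc])
    exact absurd hj (not_lt.mpr hle)
  rcases lt_or_gt_of_ne hmem with h' | h'
  · exact Or.inl ⟨i, hprev, h'⟩
  · exact Or.inr ⟨i, fun j hj => (hprev j hj).symm, h'⟩

lemma key {d k : ℕ} (C : (Fin d → Fin k) → ℕ) (ℓ : Fin d) (j : Fin k)
    (a1 a2 : Fin d → Fin k) (h1j : a1 ℓ = j) (h1v : C a1 = 1) (h2j : a2 ℓ = j) (h2v : C a2 = 2)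
    (hu1 : ∀ a, a ℓ = j → C a = 1 → a = a1) (hu2 : ∀ a, a ℓ = j → C a = 2 → a = a2)
    (hlt : cellLt a1 a2) :
    ((-1 : ℤ) ^ sliceInv (fun a => sw (C a)) ℓ j) = -((-1 : ℤ) ^ sliceInv C ℓ j) := by
  set S : Set ((Fin d → Fin k) × (Fin d → Fin k)) :=
    {p | p.1 ℓ = j ∧ p.2 ℓ = j ∧ cellLt p.1 p.2 ∧ C p.2 ≠ 0 ∧ C p.2 < C p.1} with hS_def
  have hnotmem : (a1, a2) ∉ S := by
    rintro ⟨-, -, -, -, hlt'⟩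
    simp only [h1v, h2v] at hlt'
    omega
  have hseteq : {p : (Fin d → Fin k) × (Fin d → Fin k) |
      p.1 ℓ = j ∧ p.2 ℓ = j ∧ cellLt p.1 p.2 ∧ sw (C p.2) ≠ 0 ∧ sw (C p.2) < sw (C p.1)}
      = insert (a1, a2) S := by
    ext ⟨p1, p2⟩
    simp only [Set.mem_setOf_eq, Set.mem_insert_iff, hS_def, Prod.mk.injEq]
    constructor
    · rintro ⟨hp1, hp2, hcl, hne, hsw⟩
      by_cases hsp : (C p1 = 1 ∧ C p2 = 2) ∨ (C p1 = 2 ∧ C p2 = 1)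
      · rcases hsp with ⟨hx, hy⟩ | ⟨hx, hy⟩
        · exact Or.inl ⟨hu1 p1 hp1 hx, hu2 p2 hp2 hy⟩
        · have e1 : p1 = a2 := hu2 p1 hp1 hx
          have e2 : p2 = a1 := hu1 p2 hp2 hy
          rw [e1, e2] at hcl
          exact absurd hcl (fun h => cellLt_asymm hlt h)
      · refine Or.inr ⟨hp1, hp2, hcl, ?_, (sw_lt hsp).mp hsw⟩
        intro h0
        exact hne ((sw_eq_zero _).mpr h0)
    · rintro (⟨e1, e2⟩ | ⟨hp1, hp2, hcl, hne, hlt'⟩)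
      · subst e1; subst e2
        refine ⟨h1j, h2j, hlt, ?_, ?_⟩
        · rw [h2v, sw_two]; omega
        · rw [h1v, h2v, sw_one, sw_two]; omega
      · have hsp : ¬((C p1 = 1 ∧ C p2 = 2) ∨ (C p1 = 2 ∧ C p2 = 1)) := by
          rintro (⟨hx, hy⟩ | ⟨hx, hy⟩)
          · omega
          · have e1 : p1 = a2 := hu2 p1 hp1 hx
            have e2 : p2 = a1 := hu1 p2 hp2 hy
            rw [e1, e2] at hcl
            exact cellLt_asymm hlt hcl
        refine ⟨hp1, hp2, hcl, ?_, (sw_lt hsp).mpr hlt'⟩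
        intro h0
        exact hne ((sw_eq_zero _).mp h0)
  unfold sliceInv
  rw [hseteq, Set.ncard_insert_of_notMem hnotmem (Set.toFinite _), pow_succ]
  rw [hS_def]
  ring

lemma partial_sw {d k n : ℕ} (hn : 2 ≤ n) (T : Finset (Fin d → Fin k))
    (C : (Fin d → Fin k) → ℕ) (h : IsPartialLatin d k n T C) :
    IsPartialLatin d k n T (fun a => sw (C a)) := by
  obtain ⟨h1, h2, h3⟩ := h
  refine ⟨fun a => (h1 a).trans (not_congr (sw_eq_zero _)).symm, fun a => sw_le hn (h2 a), ?_⟩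
  intro ℓ j v hv1 hvn
  have hsv1 : 1 ≤ sw v := by
    have := (sw_eq_zero v).not
    unfold sw; split_ifs <;> omega
  obtain ⟨a, ⟨haj, hav⟩, hu⟩ := h3 ℓ j (sw v) hsv1 (sw_le hn hvn)
  refine ⟨a, ⟨haj, by show sw (C a) = v; rw [hav, sw_sw]⟩, ?_⟩
  rintro b ⟨hbj, hbv⟩
  have hbv' : sw (C b) = v := hbv
  exact hu b ⟨hbj, by rw [← hbv', sw_sw]⟩

lemma slice_flip {d k n : ℕ} (hn : 2 ≤ n) (T : Finset (Fin d → Fin k))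
    (C : (Fin d → Fin k) → ℕ) (hP : IsPartialLatin d k n T C) (ℓ : Fin d) (j : Fin k) :
    ((-1 : ℤ) ^ sliceInv (fun a => sw (C a)) ℓ j) = -((-1 : ℤ) ^ sliceInv C ℓ j) := by
  obtain ⟨a1, ⟨h1j, h1v⟩, hu1⟩ := hP.2.2 ℓ j 1 (by omega) (by omega)
  obtain ⟨a2, ⟨h2j, h2v⟩, hu2⟩ := hP.2.2 ℓ j 2 (by omega) hn
  have hne : a1 ≠ a2 := by
    intro h; rw [h, h2v] at h1v; omega
  have hu1' : ∀ a, a ℓ = j → C a = 1 → a = a1 := fun a ha hv => hu1 a ⟨ha, hv⟩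
  have hu2' : ∀ a, a ℓ = j → C a = 2 → a = a2 := fun a ha hv => hu2 a ⟨ha, hv⟩
  rcases cellLt_total hne with hlt | hlt
  · exact key C ℓ j a1 a2 h1j h1v h2j h2v hu1' hu2' hlt
  · have hP' := partial_sw hn T C hP
    have hthis := key (fun a => sw (C a)) ℓ j a2 a1 h2j (by simp [h2v, sw_two])
      h1j (by simp [h1v, sw_one])
      (fun a ha hv => hu2' a ha (by have := congrArg sw hv; rwa [sw_sw, sw_one] at this))
      (fun a ha hv => hu1' a ha (by have := congrArg sw hv; rwa [sw_sw, sw_two] at this))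
      hlt
    simp only [sw_sw] at hthis
    linarith

lemma prod_neg_int {m : ℕ} (f : Fin m → ℤ) : (∏ i, -f i) = (-1) ^ m * ∏ i, f i := by
  calc (∏ i, -f i) = ∏ i, (-1) * f i := by simp
    _ = (∏ _i : Fin m, (-1 : ℤ)) * ∏ i, f i := Finset.prod_mul_distrib
    _ = (-1) ^ m * ∏ i, f i := by simp

lemma full_flip {d k n : ℕ} (hd : Odd d) (hk : Odd k) (hn : 2 ≤ n)
    (T : Finset (Fin d → Fin k)) (C : (Fin d → Fin k) → ℕ)
    (hP : IsPartialLatin d k n T C) :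
    fullSgn (fun a => sw (C a)) = -fullSgn C := by
  unfold fullSgn dirSgn
  have hstep : ∀ ℓ : Fin d,
      (∏ j : Fin k, (-1 : ℤ) ^ sliceInv (fun a => sw (C a)) ℓ j)
        = -(∏ j : Fin k, (-1 : ℤ) ^ sliceInv C ℓ j) := by
    intro ℓ
    rw [Finset.prod_congr rfl fun j _ => slice_flip hn T C hP ℓ j]
    rw [prod_neg_int, hk.neg_one_pow, neg_one_mul]
  rw [Finset.prod_congr rfl fun ℓ _ => hstep ℓ]
  rw [prod_neg_int, hd.neg_one_pow, neg_one_mul]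

end ATProof

/-- If `d` and `k` are both odd and `n > 1`, then for every magic set
`T ⊆ [k]^d` of cardinality `nk` the signed sum `AT_d(k,T)` over all partial Latin
hypercubes of type `T` vanishes. -/
theorem alon_tarsi_partial_odd_zero (d k n : ℕ) (hd : Odd d) (hk : Odd k) (hn : 1 < n)
    (T : Finset (Fin d → Fin k)) (hT : AT.IsMagic d k n T) :
    (∑ C : (Fin d → Fin k) → Fin (n + 1),
        if AT.IsPartialLatin d k n T (fun a => (C a : ℕ)) then
          AT.fullSgn (fun a => ((C a : ℕ))) else 0) = 0 := by
  classical
  have hn2 : 2 ≤ n := hn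
  have h1lt : 1 < n + 1 := by omega
  have h2lt : 2 < n + 1 := by omega
  set σ : Fin (n + 1) ≃ Fin (n + 1) := Equiv.swap ⟨1, h1lt⟩ ⟨2, h2lt⟩ with hσ
  have hcoe : ∀ x : Fin (n + 1), ((σ x : Fin (n + 1)) : ℕ) = ATProof.sw (x : ℕ) := by
    intro x
    by_cases hx1 : x = ⟨1, h1lt⟩
    · subst hx1; rw [hσ, Equiv.swap_apply_left]; simp [ATProof.sw]
    · by_cases hx2 : x = ⟨2, h2lt⟩
      · subst hx2; rw [hσ, Equiv.swap_apply_right]; simp [ATProof.sw]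
      · rw [hσ, Equiv.swap_apply_of_ne_of_ne hx1 hx2]
        have hv1 : (x : ℕ) ≠ 1 := fun h => hx1 (Fin.ext h)
        have hv2 : (x : ℕ) ≠ 2 := fun h => hx2 (Fin.ext h)
        simp [ATProof.sw, hv1, hv2]
  set F : ((Fin d → Fin k) → Fin (n + 1)) → ℤ := fun C =>
    if AT.IsPartialLatin d k n T (fun a => (C a : ℕ)) then
      AT.fullSgn (fun a => ((C a : ℕ))) else 0 with hF
  have hflip : ∀ C : (Fin d → Fin k) → Fin (n + 1), F (fun a => σ (C a)) = -F C := by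
    intro C
    have hco : (fun a => ((σ (C a) : Fin (n + 1)) : ℕ)) = fun a => ATProof.sw ((C a : ℕ)) :=
      funext fun a => hcoe _
    show (if AT.IsPartialLatin d k n T (fun a => ((σ (C a) : Fin (n + 1)) : ℕ)) then
        AT.fullSgn (fun a => ((σ (C a) : Fin (n + 1)) : ℕ)) else 0)
      = -(if AT.IsPartialLatin d k n T (fun a => ((C a : ℕ))) then
        AT.fullSgn (fun a => ((C a : ℕ))) else 0)
    rw [hco]
    by_cases hP : AT.IsPartialLatin d k n T (fun a => ((C a : ℕ)))
    · have hP' : AT.IsPartialLatin d k n T (fun a => ATProof.sw ((C a : ℕ))) :=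
        ATProof.partial_sw hn2 T _ hP
      have hfs : AT.fullSgn (fun a => ATProof.sw ((C a : ℕ)))
          = -AT.fullSgn (fun a => ((C a : ℕ))) :=
        ATProof.full_flip hd hk hn2 T _ hP
      rw [if_pos hP, if_pos hP', hfs]
    · have hP' : ¬AT.IsPartialLatin d k n T (fun a => ATProof.sw ((C a : ℕ))) := by
        intro h
        apply hP
        have := ATProof.partial_sw hn2 T _ h
        simpa [ATProof.sw_sw] using this
      rw [if_neg hP, if_neg hP', neg_zero]
  have hsum : (∑ C : (Fin d → Fin k) → Fin (n + 1), F C)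
      = ∑ C : (Fin d → Fin k) → Fin (n + 1), F (fun a => σ (C a)) := by
    exact (Fintype.sum_equiv (Equiv.piCongrRight fun _ => σ)
      (fun C => F (fun a => σ (C a))) F (fun C => rfl)).symm
  have h2 : (∑ C : (Fin d → Fin k) → Fin (n + 1), F C)
      = -∑ C : (Fin d → Fin k) → Fin (n + 1), F C := by
    calc (∑ C : (Fin d → Fin k) → Fin (n + 1), F C)
        = ∑ C : (Fin d → Fin k) → Fin (n + 1), F (fun a => σ (C a)) := hsum
      _ = ∑ C : (Fin d → Fin k) → Fin (n + 1), -F C :=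
          Finset.sum_congr rfl fun C _ => hflip C
      _ = -∑ C : (Fin d → Fin k) → Fin (n + 1), F C := by
          rw [Finset.sum_neg_distrib]
  have hgoal : (∑ C : (Fin d → Fin k) → Fin (n + 1), F C) = 0 := by linarith
  exact hgoal
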